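/- Let (Ω,𝔉,P) be a probability space with a filtration (𝔉_t)_{t=1}^{n+1}, let A* : Ω → [k] be measurable, and for each t ∈ {1,…,n+1} let P*_t be the Δ^{k−1}-valued random vector with coordinates P*_{t,a} = P(A* = a | 𝔉_t). Let F : ℝ^k → ℝ be convex with diam_F(Δ^{k−1}) < ∞, and let Δ_1,…,Δ_n be integrable real random variables. Suppose there exist constants α, β ≥ 0 such that for every t ∈ {1,…,n}, E[Δ_t | 𝔉_t] ≤ α + sqrt(β · E[D_F(P*_{t+1},P*_t) | 𝔉_t]) almost surely. Then E[∑_{t=1}^n Δ_t] ≤ α n + sqrt(n β · diam_F(Δ^{k−1})). -/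

import Mathlib

open MeasureTheory
open scoped BigOperators
open scoped Pointwise Topology

noncomputable section

/-- The one-sided directional derivative of a convex function `F` at `y` in the
direction `v`: for convex `F` the difference quotients are monotone in `h`, so it
equals the infimum over `h > 0`. -/
def dirDeriv {k : ℕ} (F : (Fin k → ℝ) → ℝ) (y v : Fin k → ℝ) : ℝ :=
  sInf ((fun h : ℝ => (F (y + h • v) - F y) / h) '' Set.Ioi 0)

/-- The Bregman divergence of a convex function `F`. -/
def bregman {k : ℕ} (F : (Fin k → ℝ) → ℝ) (x y : Fin k → ℝ) : ℝ :=
  F x - F y - dirDeriv F y (x - y)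

/-- The diameter of a set with respect to `F`: `sup_{x,y ∈ D} (F x − F y)`. -/
def bregDiam {k : ℕ} (F : (Fin k → ℝ) → ℝ) (D : Set (Fin k → ℝ)) : ℝ :=
  sSup {z | ∃ x ∈ D, ∃ y ∈ D, z = F x - F y}

/-- The posterior distribution of `A*` given a `σ`-algebra: the vector of conditional
probabilities `P(A* = a | m')`. -/
def posterior {Ω : Type*} {mΩ : MeasurableSpace Ω} (P : Measure Ω) {k : ℕ}
    (Astar : Ω → Fin k) (m' : MeasurableSpace Ω) : Ω → Fin k → ℝ :=
  fun ω a => (P[fun ω' => if Astar ω' = a then (1 : ℝ) else 0 | m']) ω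

namespace DD
variable {k : ℕ} {F : (Fin k → ℝ) → ℝ}

/-- difference quotient -/
def Q (F : (Fin k → ℝ) → ℝ) (y v : Fin k → ℝ) (h : ℝ) : ℝ := (F (y + h • v) - F y) / h

lemma dirDeriv_def (y v : Fin k → ℝ) : dirDeriv F y v = sInf (Q F y v '' Set.Ioi 0) := rfl

lemma lineConvex (hF : ConvexOn ℝ Set.univ F) (y v : Fin k → ℝ) :
    ConvexOn ℝ Set.univ (fun h : ℝ => F (y + h • v)) := by
  have := hF.comp_affineMap (AffineMap.lineMap y (y + v) : ℝ →ᵃ[ℝ] (Fin k → ℝ))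
  simp only [Set.preimage_univ] at this
  convert this using 1
  iterate 4 rfl
  funext h
  simp only [Function.comp, AffineMap.lineMap_apply]
  congr 1
  funext a
  simp
  ring

lemma Q_mono (hF : ConvexOn ℝ Set.univ F) (y v : Fin k → ℝ) {h₁ h₂ : ℝ}
    (h0 : 0 < h₁) (h12 : h₁ ≤ h₂) : Q F y v h₁ ≤ Q F y v h₂ := by
  have hc := lineConvex hF y v
  have := hc.secant_mono (a := 0) (x := h₁) (y := h₂) trivial trivial trivial
    (ne_of_gt h0) (ne_of_gt (lt_of_lt_of_le h0 h12)) h12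
  simpa [Q, zero_smul] using this

lemma le_Q (hF : ConvexOn ℝ Set.univ F) (y v : Fin k → ℝ) {h : ℝ} (h0 : 0 < h) :
    F y - F (y - v) ≤ Q F y v h := by
  have hc := lineConvex hF y v
  have := hc.secant_mono (a := 0) (x := (-1 : ℝ)) (y := h) trivial trivial trivial
    (by norm_num) (ne_of_gt h0) (by linarith)
  simp only [zero_smul, add_zero, sub_zero] at this
  have he : y + (-1 : ℝ) • v = y - v := by
    funext a; simp [sub_eq_add_neg]
  rw [he] at this
  have h2 : -(F (y - v) - F y) ≤ (F (y + h • v) - F y) / h := by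
    convert this using 1; rfl; ring
  simpa [Q, neg_sub] using h2


lemma bddBelow_Q (hF : ConvexOn ℝ Set.univ F) (y v : Fin k → ℝ) :
    BddBelow (Q F y v '' Set.Ioi 0) := by
  refine ⟨F y - F (y - v), ?_⟩
  rintro b ⟨h, hh, rfl⟩
  exact le_Q hF y v hh

lemma nonempty_Q (y v : Fin k → ℝ) : (Q F y v '' Set.Ioi 0).Nonempty :=
  ⟨Q F y v 1, 1, by norm_num, rfl⟩

lemma dirDeriv_le_Q (hF : ConvexOn ℝ Set.univ F) (y v : Fin k → ℝ) {h : ℝ} (h0 : 0 < h) :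
    dirDeriv F y v ≤ Q F y v h :=
  csInf_le (bddBelow_Q hF y v) ⟨h, h0, rfl⟩

lemma le_dirDeriv (hF : ConvexOn ℝ Set.univ F) (y v : Fin k → ℝ) :
    F y - F (y - v) ≤ dirDeriv F y v :=
  le_csInf (nonempty_Q y v) (by rintro b ⟨h, hh, rfl⟩; exact le_Q hF y v hh)

lemma dirDeriv_le (hF : ConvexOn ℝ Set.univ F) (y v : Fin k → ℝ) :
    dirDeriv F y v ≤ F (y + v) - F y := by
  have := dirDeriv_le_Q hF y v (h := 1) one_pos
  simpa [Q] using this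

lemma bregman_sub_sub_nonneg (hF : ConvexOn ℝ Set.univ F) (x y : Fin k → ℝ) :
    dirDeriv F y (x - y) ≤ F x - F y := by
  have := dirDeriv_le hF y (x - y)
  simpa using this

lemma dirDeriv_eq_iInf (hF : ConvexOn ℝ Set.univ F) (y v : Fin k → ℝ) :
    dirDeriv F y v = ⨅ m : ℕ, Q F y v (1 / (m + 1)) := by
  have hbdd : BddBelow (Set.range fun m : ℕ => Q F y v (1 / (m + 1))) := by
    refine ⟨F y - F (y - v), ?_⟩
    rintro b ⟨m, rfl⟩
    exact le_Q hF y v (by positivity)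
  apply le_antisymm
  · exact le_ciInf fun m => dirDeriv_le_Q hF y v (by positivity)
  · refine le_csInf (nonempty_Q y v) ?_
    rintro b ⟨h, hh, rfl⟩
    obtain ⟨m, hm⟩ := exists_nat_one_div_lt (show (0:ℝ) < h from hh)
    calc (⨅ m : ℕ, Q F y v (1 / (m + 1))) ≤ Q F y v (1 / (m + 1)) := ciInf_le hbdd m
    _ ≤ Q F y v h := Q_mono hF y v (by positivity) (by push_cast at hm ⊢; linarith)

lemma dirDeriv_zero (hF : ConvexOn ℝ Set.univ F) (y : Fin k → ℝ) :
    dirDeriv F y 0 = 0 := by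
  apply le_antisymm
  · have := dirDeriv_le hF y 0; simpa using this
  · have := le_dirDeriv hF y 0; simpa using this

lemma Q_smul (y v : Fin k → ℝ) {c h : ℝ} (hc : 0 < c) (hh : 0 < h) :
    Q F y (c • v) h = c * Q F y v (c * h) := by
  simp only [Q, smul_smul, mul_comm h c]
  field_simp

lemma dirDeriv_smul (hF : ConvexOn ℝ Set.univ F) (y v : Fin k → ℝ) {c : ℝ} (hc : 0 < c) :
    dirDeriv F y (c • v) = c * dirDeriv F y v := by
  have himg : Q F y (c • v) '' Set.Ioi 0 = (c • (Q F y v '' Set.Ioi 0) : Set ℝ) := by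
    ext b
    simp only [Set.mem_image, Set.mem_smul_set, Set.mem_Ioi, smul_eq_mul]
    constructor
    · rintro ⟨h, hh, rfl⟩
      exact ⟨Q F y v (c * h), ⟨c * h, by positivity, rfl⟩, (Q_smul y v hc hh).symm⟩
    · rintro ⟨z, ⟨h, hh, rfl⟩, rfl⟩
      refine ⟨h / c, by positivity, ?_⟩
      rw [Q_smul y v hc (by positivity)]
      congr 1
      field_simp
  rw [dirDeriv_def, dirDeriv_def, himg, Real.sInf_smul_of_nonneg (le_of_lt hc), smul_eq_mul]


lemma dirDeriv_add_le (hF : ConvexOn ℝ Set.univ F) (y u v : Fin k → ℝ) :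
    dirDeriv F y (u + v) ≤ dirDeriv F y u + dirDeriv F y v := by
  have key : ∀ h : ℝ, 0 < h → Q F y (u + v) h ≤ Q F y u (2 * h) + Q F y v (2 * h) := by
    intro h hh
    have hmid : y + h • (u + v) = (1/2 : ℝ) • (y + (2*h) • u) + (1/2 : ℝ) • (y + (2*h) • v) := by
      funext a; simp; ring
    have hconv := hF.2 (Set.mem_univ (y + (2*h) • u)) (Set.mem_univ (y + (2*h) • v))
      (by norm_num : (0:ℝ) ≤ 1/2) (by norm_num : (0:ℝ) ≤ 1/2) (by norm_num)
    rw [← hmid] at hconv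
    simp only [Q, smul_eq_mul]
    rw [smul_eq_mul, smul_eq_mul] at hconv
    rw [← add_div, div_le_div_iff₀ hh (by positivity)]
    nlinarith [mul_le_mul_of_nonneg_left hconv hh.le]
  refine le_of_forall_pos_le_add fun ε hε => ?_
  obtain ⟨b₁, ⟨h₁, hh₁, rfl⟩, hb₁⟩ := Real.lt_sInf_add_pos (nonempty_Q (F := F) y u) (half_pos hε)
  obtain ⟨b₂, ⟨h₂, hh₂, rfl⟩, hb₂⟩ := Real.lt_sInf_add_pos (nonempty_Q (F := F) y v) (half_pos hε)
  have hh₁' : (0:ℝ) < h₁ := hh₁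
  have hh₂' : (0:ℝ) < h₂ := hh₂
  set h := min h₁ h₂ / 2 with hh_def
  have hh : 0 < h := by positivity
  have h2h₁ : 2 * h ≤ h₁ := by
    simp only [hh_def]
    have := min_le_left h₁ h₂; linarith
  have h2h₂ : 2 * h ≤ h₂ := by
    simp only [hh_def]
    have := min_le_right h₁ h₂; linarith
  calc dirDeriv F y (u + v) ≤ Q F y (u + v) h := dirDeriv_le_Q hF y (u + v) hh
    _ ≤ Q F y u (2 * h) + Q F y v (2 * h) := key h hh
    _ ≤ Q F y u h₁ + Q F y v h₂ :=
        add_le_add (Q_mono hF y u (by positivity) h2h₁) (Q_mono hF y v (by positivity) h2h₂)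
    _ ≤ dirDeriv F y u + dirDeriv F y v + ε := by
        rw [dirDeriv_def, dirDeriv_def]; linarith

/-- Existence of a linear minorant of the directional derivative (a subgradient). -/
lemma exists_subgradient (hF : ConvexOn ℝ Set.univ F) (y : Fin k → ℝ) :
    ∃ g : (Fin k → ℝ) →ₗ[ℝ] ℝ, ∀ v, g v ≤ dirDeriv F y v := by
  obtain ⟨g, -, hg⟩ := exists_extension_of_le_sublinear
    (⟨⊥, 0⟩ : (Fin k → ℝ) →ₗ.[ℝ] ℝ) (dirDeriv F y)
    (fun c hc x => dirDeriv_smul hF y x hc)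
    (fun x z => dirDeriv_add_le hF y x z)
    (by
      rintro ⟨x, hx⟩
      rcases (Submodule.mem_bot ℝ).mp hx with rfl
      simp [dirDeriv_zero hF y])
  exact ⟨g, hg⟩


lemma continuous_of_convexOn (hF : ConvexOn ℝ Set.univ F) : Continuous F := by
  rw [← continuousOn_univ]
  exact hF.continuousOn isOpen_univ

lemma lower_affine (hF : ConvexOn ℝ Set.univ F) (y x : Fin k → ℝ)
    (g : (Fin k → ℝ) →ₗ[ℝ] ℝ) (hg : ∀ v, g v ≤ dirDeriv F y v) :
    2 * F y - F (y + (y - x)) ≤ F y + g (x - y) := by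
  have h1 : g (y - x) ≤ dirDeriv F y (y - x) := hg _
  have h2 : dirDeriv F y (y - x) ≤ F (y + (y - x)) - F y := dirDeriv_le hF y (y - x)
  have h3 : g (x - y) = - g (y - x) := by
    rw [← map_neg]; congr 1; abel
  linarith

/-- A countable family of affine minorants of `F` whose supremum is `F`. -/
lemma exists_affine_family (hF : ConvexOn ℝ Set.univ F) :
    ∃ (L : (Fin k → ℚ) → ((Fin k → ℝ) →ₗ[ℝ] ℝ)) (c : (Fin k → ℚ) → ℝ),
      (∀ q x, L q x + c q ≤ F x) ∧
      ∀ x : Fin k → ℝ, ∀ ε > 0, ∃ q, F x ≤ L q x + c q + ε := by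
  choose G hG using fun y => exists_subgradient hF y
  refine ⟨fun q => G (fun a => (q a : ℝ)),
    fun q => F (fun a => (q a : ℝ)) - G (fun a => (q a : ℝ)) (fun a => (q a : ℝ)), ?_, ?_⟩
  · intro q x
    beta_reduce
    set y : Fin k → ℝ := fun a => ((q a : ℝ)) with hy
    have h1 : G y (x - y) ≤ dirDeriv F y (x - y) := hG y _
    have h2 : dirDeriv F y (x - y) ≤ F x - F y := bregman_sub_sub_nonneg hF x y
    have h3 : G y x - G y y = G y (x - y) := (map_sub _ _ _).symm
    linarith
  · intro x ε hε
    have hφ : ContinuousAt (fun y => 2 * F y - F (y + (y - x))) x := by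
      have hc := continuous_of_convexOn hF
      exact ((continuous_const.mul hc).sub
        (hc.comp (continuous_id.add (continuous_id.sub continuous_const)))).continuousAt
    rw [Metric.continuousAt_iff] at hφ
    obtain ⟨δ, hδ, hball⟩ := hφ ε hε
    have hq : ∀ a : Fin k, ∃ r : ℚ, x a < (r:ℝ) ∧ (r:ℝ) < x a + δ := fun a =>
      exists_rat_btwn (by linarith)
    choose q hq1 hq2 using hq
    set y : Fin k → ℝ := fun a => ((q a : ℝ)) with hy
    have hdist : dist y x < δ := by
      rw [dist_pi_lt_iff hδ]
      intro a
      rw [Real.dist_eq, abs_lt]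
      constructor <;> [linarith [hq1 a, hq2 a]; linarith [hq1 a, hq2 a]]
    have hb := hball hdist
    rw [Real.dist_eq, abs_lt] at hb
    have hfix : (2 * F x - F (x + (x - x))) = F x := by
      have : x + (x - x) = x := by abel
      rw [this]; ring
    rw [hfix] at hb
    refine ⟨q, ?_⟩
    beta_reduce
    have hlow := lower_affine hF y x (G y) (hG y)
    have h3 : G y x - G y y = G y (x - y) := (map_sub _ _ _).symm
    linarith [hb.1]


lemma measurable_dirDeriv (hF : ConvexOn ℝ Set.univ F) {Ω : Type*} {mΩ : MeasurableSpace Ω}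
    {f g : Ω → Fin k → ℝ} (hf : Measurable f) (hg : Measurable g) :
    Measurable fun ω => dirDeriv F (f ω) (g ω) := by
  have hFc := continuous_of_convexOn hF
  have heq : (fun ω => dirDeriv F (f ω) (g ω))
      = fun ω => ⨅ m : ℕ, Q F (f ω) (g ω) (1/((m:ℝ)+1)) :=
    funext fun ω => dirDeriv_eq_iInf hF _ _
  rw [heq]
  refine Measurable.iInf fun m => ?_
  have hc : Continuous fun p : (Fin k → ℝ) × (Fin k → ℝ) =>
      (F (p.1 + (1/((m:ℝ)+1)) • p.2) - F p.1) / (1/((m:ℝ)+1)) :=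
    ((hFc.comp (continuous_fst.add (continuous_snd.const_smul (1/((m:ℝ)+1))))).sub
      (hFc.comp continuous_fst)).div_const (1/((m:ℝ)+1))
  exact hc.measurable.comp (hf.prodMk hg)

section CondJensen
variable {Ω : Type*} {mΩ : MeasurableSpace Ω} {μ : Measure Ω} [IsProbabilityMeasure μ]
  {m : MeasurableSpace Ω}

lemma linear_decomp (L : (Fin k → ℝ) →ₗ[ℝ] ℝ) (x : Fin k → ℝ) :
    L x = ∑ a, x a * L (fun j => if a = j then (1:ℝ) else 0) := by
  conv_lhs => rw [pi_eq_sum_univ x]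
  rw [map_sum]
  exact Finset.sum_congr rfl fun a _ => by rw [LinearMap.map_smul, smul_eq_mul]

lemma integrable_linear (L : (Fin k → ℝ) →ₗ[ℝ] ℝ) (Z : Ω → Fin k → ℝ)
    (hZ : ∀ a, Integrable (fun ω => Z ω a) μ) :
    Integrable (fun ω => L (Z ω)) μ := by
  have h1 : (fun ω => L (Z ω)) =
      fun ω => ∑ a : Fin k, (fun ω' => L (fun j => if a = j then (1:ℝ) else 0) * Z ω' a) ω := by
    funext ω
    rw [linear_decomp L (Z ω)]
    exact Finset.sum_congr rfl fun a _ => mul_comm _ _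
  rw [h1]
  exact integrable_finset_sum _ fun a _ => (hZ a).const_mul _

lemma condexp_linear (hm : m ≤ mΩ) (L : (Fin k → ℝ) →ₗ[ℝ] ℝ) (Z : Ω → Fin k → ℝ)
    (hZ : ∀ a, Integrable (fun ω => Z ω a) μ) :
    (μ[fun ω => L (Z ω)|m]) =ᵐ[μ] fun ω => L (fun a => (μ[fun ω' => Z ω' a|m]) ω) := by
  have h1 : (fun ω => L (Z ω)) =
      ∑ a : Fin k, (L (fun j => if a = j then (1:ℝ) else 0)) • (fun ω => Z ω a) := by
    funext ω
    rw [linear_decomp L (Z ω)]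
    simp only [Finset.sum_apply, Pi.smul_apply, smul_eq_mul]
    exact Finset.sum_congr rfl fun a _ => mul_comm _ _
  rw [h1]
  have h2 := condExp_finsetSum (s := Finset.univ)
    (f := fun a => (L (fun j => if a = j then (1:ℝ) else 0)) • (fun ω => Z ω a))
    (fun a _ => Integrable.smul _ (hZ a)) (m := m)
  refine h2.trans ?_
  have h3 : ∀ᵐ ω ∂μ, ∀ a : Fin k,
      (μ[(L (fun j => if a = j then (1:ℝ) else 0)) • (fun ω => Z ω a)|m]) ω =
      ((L (fun j => if a = j then (1:ℝ) else 0)) • (μ[fun ω => Z ω a|m])) ω := by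
    rw [ae_all_iff]
    intro a
    exact condExp_smul _ _ _
  filter_upwards [h3] with ω hω
  simp only [Finset.sum_apply]
  rw [linear_decomp L]
  refine Finset.sum_congr rfl fun a _ => ?_
  rw [hω a]
  simp [mul_comm]

/-- Conditional Jensen inequality for a convex function on `ℝ^k`. -/
lemma condexp_jensen (hF : ConvexOn ℝ Set.univ F) (hm : m ≤ mΩ) (Z : Ω → Fin k → ℝ)
    (hZ : ∀ a, Integrable (fun ω => Z ω a) μ)
    (hFZ : Integrable (fun ω => F (Z ω)) μ) :
    ∀ᵐ ω ∂μ, F (fun a => (μ[fun ω' => Z ω' a|m]) ω) ≤ (μ[fun ω' => F (Z ω')|m]) ω := by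
  obtain ⟨L, c, hmin, hsup⟩ := exists_affine_family hF
  have key : ∀ᵐ ω ∂μ, ∀ q : Fin k → ℚ,
      L q (fun a => (μ[fun ω' => Z ω' a|m]) ω) + c q ≤ (μ[fun ω' => F (Z ω')|m]) ω := by
    rw [ae_all_iff]
    intro q
    have hLint : Integrable (fun ω => L q (Z ω)) μ := integrable_linear (L q) Z hZ
    have hint : Integrable (fun ω => L q (Z ω) + c q) μ := hLint.add (integrable_const _)
    have hmono := condExp_mono (m := m) hint hFZ
      (Filter.Eventually.of_forall fun ω => hmin q (Z ω))
    have hlin := condexp_linear hm (L q) Z hZ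
    have hfeq : (fun ω => L q (Z ω) + c q) = ((fun ω => L q (Z ω)) + fun _ => c q) := rfl
    have hconst := condExp_add (μ := μ) (m := m) hLint (integrable_const (c q))
    rw [← hfeq] at hconst
    have hcc : (μ[fun _ : Ω => c q|m]) =ᵐ[μ] fun _ => c q := by
      rw [condExp_const hm]
    filter_upwards [hmono, hlin, hconst, hcc] with ω h1 h2 h3 h4
    have h5 : (μ[fun ω => L q (Z ω) + c q|m]) ω
        = L q (fun a => (μ[fun ω' => Z ω' a|m]) ω) + c q := by
      rw [h3]
      simp only [Pi.add_apply]
      rw [h2, h4]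
    rw [← h5]
    exact h1
  filter_upwards [key] with ω hω
  refine le_of_forall_pos_le_add fun ε hε => ?_
  obtain ⟨q, hq⟩ := hsup (fun a => (μ[fun ω' => Z ω' a|m]) ω) ε hε
  exact hq.trans (by linarith [hω q])


lemma integral_sqrt_le' {g : Ω → ℝ} (hg : Integrable g μ) (hg0 : 0 ≤ᵐ[μ] g)
    (hsg : Integrable (fun ω => Real.sqrt (g ω)) μ) :
    ∫ ω, Real.sqrt (g ω) ∂μ ≤ Real.sqrt (∫ ω, g ω ∂μ) := by
  set c := ∫ ω, Real.sqrt (g ω) ∂μ with hc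
  have hc0 : 0 ≤ c := integral_nonneg fun ω => Real.sqrt_nonneg _
  have hsq : (0:ℝ) ≤ ∫ ω, (Real.sqrt (g ω) - c)^2 ∂μ := integral_nonneg fun ω => sq_nonneg _
  have hexp : ∫ ω, (Real.sqrt (g ω) - c)^2 ∂μ = ∫ ω, g ω ∂μ - c^2 := by
    have heq : (fun ω => (Real.sqrt (g ω) - c)^2) =ᵐ[μ]
        fun ω => g ω - (2*c) * Real.sqrt (g ω) + c^2 := by
      filter_upwards [hg0] with ω h0
      have : Real.sqrt (g ω)^2 = g ω := Real.sq_sqrt h0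
      ring_nf
      nlinarith [this]
    have h1 : Integrable (fun ω => g ω - 2*c*Real.sqrt (g ω)) μ := hg.sub (hsg.const_mul (2*c))
    have h2 : Integrable (fun _ : Ω => c^2) μ := integrable_const _
    have h3 : Integrable (fun ω => 2*c*Real.sqrt (g ω)) μ := hsg.const_mul (2*c)
    rw [integral_congr_ae heq, integral_add h1 h2,
      integral_sub hg h3, integral_const, MeasureTheory.integral_const_mul]
    simp only [measure_univ, probReal_univ, ENNReal.toReal_one, smul_eq_mul, one_mul]
    rw [← hc]; ring
  have hcc : c^2 ≤ ∫ ω, g ω ∂μ := by rw [hexp] at hsq; linarith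
  calc c = Real.sqrt (c^2) := (Real.sqrt_sq hc0).symm
  _ ≤ Real.sqrt (∫ ω, g ω ∂μ) := Real.sqrt_le_sqrt hcc

end CondJensen

end DD


section Post
variable {Ω : Type*} {mΩ : MeasurableSpace Ω} {P : Measure Ω} [IsProbabilityMeasure P]
  {k : ℕ} {Astar : Ω → Fin k}

lemma posterior_coord_integrable (m' : MeasurableSpace Ω) (a : Fin k) :
    Integrable (fun ω => posterior P Astar m' ω a) P := integrable_condExp

lemma posterior_measurable (m' : MeasurableSpace Ω) (hm' : m' ≤ mΩ) :
    @Measurable Ω (Fin k → ℝ) mΩ _ (posterior P Astar m') :=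
  (@measurable_pi_iff Ω (Fin k) (fun _ => ℝ) mΩ (fun _ => inferInstance) _).mpr
    fun _ => ((stronglyMeasurable_condExp (m := m')).mono hm').measurable

lemma indicator_integrable (hA : Measurable Astar) (a : Fin k) :
    Integrable (fun ω' => if Astar ω' = a then (1:ℝ) else 0) P := by
  have hms : MeasurableSet {ω' | Astar ω' = a} := hA (measurableSet_singleton a)
  refine Integrable.mono' (integrable_const 1)
    (measurable_const.ite hms measurable_const).aestronglyMeasurable ?_
  filter_upwards with ω
  by_cases h : Astar ω = a <;> simp [h]

lemma posterior_mem_simplex (hA : Measurable Astar) (m' : MeasurableSpace Ω) (hm' : m' ≤ mΩ) :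
    ∀ᵐ ω ∂P, posterior P Astar m' ω ∈ stdSimplex ℝ (Fin k) := by
  have hnn : ∀ᵐ ω ∂P, ∀ a, 0 ≤ posterior P Astar m' ω a := by
    rw [ae_all_iff]
    intro a
    exact condExp_nonneg (Filter.Eventually.of_forall fun ω' => by positivity)
  have hsum : ∀ᵐ ω ∂P, ∑ a, posterior P Astar m' ω a = 1 := by
    have hone : (∑ a : Fin k, fun ω' => if Astar ω' = a then (1:ℝ) else 0)
        = fun _ : Ω => (1:ℝ) := by
      funext ω'
      simp [Finset.sum_apply, Finset.sum_ite_eq]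
    have h1 := condExp_finsetSum (s := Finset.univ)
      (f := fun a => fun ω' => if Astar ω' = a then (1:ℝ) else 0)
      (fun a _ => indicator_integrable (P := P) hA a) (m := m')
    rw [hone, condExp_const (μ := P) hm' (1:ℝ)] at h1
    filter_upwards [h1.symm] with ω hω
    calc ∑ a, posterior P Astar m' ω a
        = (∑ a : Fin k, P[fun ω' => if Astar ω' = a then (1:ℝ) else 0|m']) ω := by
          rw [Finset.sum_apply]; rfl
      _ = 1 := hω
  filter_upwards [hnn, hsum] with ω h1 h2
  exact ⟨h1, h2⟩

lemma posterior_martingale {m₁ m₂ : MeasurableSpace Ω} (h12 : m₁ ≤ m₂) (h2 : m₂ ≤ mΩ)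
    (a : Fin k) :
    P[fun ω => posterior P Astar m₂ ω a|m₁] =ᵐ[P] fun ω => posterior P Astar m₁ ω a :=
  condExp_condExp_of_le h12 h2

end Post

open DD

/-- **Regret bound via the posterior martingale of the optimal action.**  If the
one-step regret is bounded by `α + √(β E_t[D_F(P*_{t+1}, P*_t)])` where `P*_t` is the
posterior distribution of the optimal action `A*` given `𝔉_t`, then the total expected
regret is at most `α n + √(n β diam_F(Δ^{k-1}))`. -/
theorem posterior_bregman_regret_bound {Ω : Type*} {mΩ : MeasurableSpace Ω}
    {P : Measure Ω} [IsProbabilityMeasure P] {k n : ℕ} (hk : 1 ≤ k)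
    (𝔉 : Filtration ℕ mΩ)
    (Astar : Ω → Fin k) (hA : Measurable Astar)
    (F : (Fin k → ℝ) → ℝ) (hF : ConvexOn ℝ Set.univ F)
    (hdiam : BddAbove
      {z | ∃ x ∈ stdSimplex ℝ (Fin k), ∃ y ∈ stdSimplex ℝ (Fin k), z = F x - F y})
    (Δ : ℕ → Ω → ℝ) (hΔ : ∀ t < n, Integrable (Δ t) P)
    (α β : ℝ) (hα : 0 ≤ α) (hβ : 0 ≤ β)
    (hbound : ∀ t < n, ∀ᵐ ω ∂P,
      (P[Δ t | 𝔉 t]) ω ≤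
        α + Real.sqrt (β *
          (P[fun ω' => bregman F (posterior P Astar (𝔉 (t + 1)) ω')
              (posterior P Astar (𝔉 t) ω') | 𝔉 t]) ω)) :
    ∫ ω, (∑ t ∈ Finset.range n, Δ t ω) ∂P ≤
      α * n + Real.sqrt (n * β * bregDiam F (stdSimplex ℝ (Fin k))) := by
  classical
  have hFc := continuous_of_convexOn hF
  set S := stdSimplex ℝ (Fin k) with hS
  set box : Set (Fin k → ℝ) := Set.Icc (fun _ => (-1:ℝ)) (fun _ => (2:ℝ)) with hbox
  obtain ⟨C, hC⟩ := (isCompact_Icc (a := fun _ : Fin k => (-1:ℝ))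
    (b := fun _ => (2:ℝ))).exists_bound_of_continuousOn hFc.continuousOn
  have hSsub : ∀ x ∈ S, ∀ a, 0 ≤ x a ∧ x a ≤ 1 := by
    intro x hx a
    refine ⟨hx.1 a, ?_⟩
    calc x a ≤ ∑ i, x i := Finset.single_le_sum (fun i _ => hx.1 i) (Finset.mem_univ a)
    _ = 1 := hx.2
  have hSbox : ∀ x ∈ S, x ∈ box := by
    intro x hx
    rw [hbox, Set.mem_Icc]
    constructor <;> (intro a; obtain ⟨h1, h2⟩ := hSsub x hx a) <;> simp <;> linarith
  have hcombo : ∀ x ∈ S, ∀ y ∈ S, y + (y - x) ∈ box := by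
    intro x hx y hy
    rw [hbox, Set.mem_Icc]
    constructor <;> intro a <;>
      obtain ⟨h1, h2⟩ := hSsub x hx a <;>
      obtain ⟨h3, h4⟩ := hSsub y hy a <;>
      simp only [Pi.add_apply, Pi.sub_apply] <;> norm_num <;> linarith
  set X : ℕ → Ω → Fin k → ℝ := fun t => posterior P Astar (𝔉 t) with hX
  have hXm : ∀ t, Measurable (X t) := fun t => posterior_measurable _ (𝔉.le t)
  have hXS : ∀ t, ∀ᵐ ω ∂P, X t ω ∈ S := fun t => posterior_mem_simplex hA _ (𝔉.le t)
  have hXa : ∀ t a, Integrable (fun ω => X t ω a) P := fun t a => integrable_condExp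
  -- bounds on F over the box
  have hCF : ∀ x ∈ S, |F x| ≤ C := fun x hx => by
    simpa [Real.norm_eq_abs] using hC x (hSbox x hx)
  have hmemS : (fun _ : Fin k => (1:ℝ)/k) ∈ S := by
    have hk0 : (k:ℝ) ≠ 0 := by positivity
    constructor
    · intro a; positivity
    · simp [Finset.sum_const, Finset.card_univ]
      field_simp
  have hC0 : 0 ≤ C := le_trans (abs_nonneg _) (hCF _ hmemS)
  have hCbox : ∀ x ∈ box, |F x| ≤ C := fun x hx => by
    simpa [Real.norm_eq_abs] using hC x hx
  -- the Bregman increments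
  set B : ℕ → Ω → ℝ := fun t ω => bregman F (X (t+1) ω) (X t ω) with hB
  set dd : ℕ → Ω → ℝ := fun t ω => dirDeriv F (X t ω) (X (t+1) ω - X t ω) with hdd
  have hBmeas : ∀ t, Measurable (B t) := by
    intro t
    have h1 : Measurable fun ω => F (X (t+1) ω) := hFc.measurable.comp (hXm (t+1))
    have h2 : Measurable fun ω => F (X t ω) := hFc.measurable.comp (hXm t)
    have h3 : Measurable (dd t) := measurable_dirDeriv hF (hXm t) ((hXm (t+1)).sub (hXm t))
    exact (h1.sub h2).sub h3
  have hddmeas : ∀ t, Measurable (dd t) :=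
    fun t => measurable_dirDeriv hF (hXm t) ((hXm (t+1)).sub (hXm t))
  have hBnonneg : ∀ t ω, 0 ≤ B t ω := by
    intro t ω
    have := bregman_sub_sub_nonneg hF (X (t+1) ω) (X t ω)
    simp only [hB, bregman]
    linarith
  have hdd_bds : ∀ t, ∀ᵐ ω ∂P, F (X t ω) - F (X t ω + (X t ω - X (t+1) ω)) ≤ dd t ω
      ∧ dd t ω ≤ F (X (t+1) ω) - F (X t ω) := by
    intro t
    filter_upwards with ω
    constructor
    · have h := le_dirDeriv hF (X t ω) (X (t+1) ω - X t ω)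
      have he : X t ω - (X (t+1) ω - X t ω) = X t ω + (X t ω - X (t+1) ω) := by abel
      rw [he] at h
      exact h
    · exact bregman_sub_sub_nonneg hF (X (t+1) ω) (X t ω)
  have hddbdd : ∀ t, ∀ᵐ ω ∂P, ‖dd t ω‖ ≤ 2*C := by
    intro t
    filter_upwards [hXS t, hXS (t+1), hdd_bds t] with ω hy hx hb
    have hFy := hCF _ hy
    have hFx := hCF _ hx
    have hFc2 := hCbox _ (hcombo _ hx _ hy)
    rw [Real.norm_eq_abs, abs_le]
    constructor <;> [skip; skip] <;> rw [abs_le] at hFy hFx hFc2 <;>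
      [linarith [hb.1]; linarith [hb.2]]
  have hBbdd : ∀ t, ∀ᵐ ω ∂P, ‖B t ω‖ ≤ 4*C := by
    intro t
    filter_upwards [hXS t, hXS (t+1), hdd_bds t] with ω hy hx hb
    have hFy := hCF _ hy
    have hFx := hCF _ hx
    have hFc2 := hCbox _ (hcombo _ hx _ hy)
    rw [Real.norm_eq_abs, abs_le]
    have hBval : B t ω = F (X (t+1) ω) - F (X t ω) - dd t ω := rfl
    rw [abs_le] at hFy hFx hFc2
    constructor <;> rw [hBval] <;> [linarith [hb.2]; linarith [hb.1]]
  have hBint : ∀ t, Integrable (B t) P := fun t =>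
    Integrable.mono' (integrable_const (4*C)) (hBmeas t).aestronglyMeasurable (hBbdd t)
  have hddint : ∀ t, Integrable (dd t) P := fun t =>
    Integrable.mono' (integrable_const (2*C)) (hddmeas t).aestronglyMeasurable (hddbdd t)
  have hFXint : ∀ t, Integrable (fun ω => F (X t ω)) P := by
    intro t
    refine Integrable.mono' (integrable_const C)
      (hFc.measurable.comp (hXm t)).aestronglyMeasurable ?_
    filter_upwards [hXS t] with ω hω
    rw [Real.norm_eq_abs]
    exact hCF _ hω
  have hdd_nonneg : ∀ t, 0 ≤ ∫ ω, dd t ω ∂P := by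
    intro t
    set V : Ω → Fin k → ℝ := fun ω => X (t+1) ω - X t ω with hV
    set q : ℕ → Ω → ℝ := fun m ω => DD.Q F (X t ω) (V ω) (1/((m:ℝ)+1)) with hq
    have hsm : ∀ m : ℕ, (0:ℝ) < 1/((m:ℝ)+1) := fun m => by positivity
    have hs1 : ∀ m : ℕ, 1/((m:ℝ)+1) ≤ 1 := fun m => by
      rw [div_le_one (by positivity)]
      linarith [Nat.cast_nonneg (α := ℝ) m]
    have hqmeas : ∀ m, Measurable (q m) := by
      intro m
      have hc : Continuous fun p : (Fin k → ℝ) × (Fin k → ℝ) =>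
          (F (p.1 + (1/((m:ℝ)+1)) • p.2) - F p.1) / (1/((m:ℝ)+1)) :=
        ((hFc.comp (continuous_fst.add (continuous_snd.const_smul (1/((m:ℝ)+1))))).sub
          (hFc.comp continuous_fst)).div_const (1/((m:ℝ)+1))
      exact hc.measurable.comp ((hXm t).prodMk (((hXm (t+1)).sub (hXm t))))
    have hZS : ∀ m : ℕ, ∀ᵐ ω ∂P, X t ω + (1/((m:ℝ)+1)) • V ω ∈ S := by
      intro m
      filter_upwards [hXS t, hXS (t+1)] with ω h0 h1
      have hrw : X t ω + (1/((m:ℝ)+1)) • V ω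
          = (1 - 1/((m:ℝ)+1)) • X t ω + (1/((m:ℝ)+1)) • X (t+1) ω := by
        funext a
        simp only [Pi.add_apply, Pi.smul_apply, Pi.sub_apply, smul_eq_mul, hV]
        ring
      rw [hrw]
      exact (convex_stdSimplex ℝ (Fin k)) h0 h1 (by linarith [hs1 m]) (hsm m).le (by ring)
    have hqbdd : ∀ m, ∀ᵐ ω ∂P, ‖q m ω‖ ≤ 2*C := by
      intro m
      filter_upwards [hXS t, hXS (t+1)] with ω hy hx
      have hub : q m ω ≤ F (X (t+1) ω) - F (X t ω) := by
        have h1 : DD.Q F (X t ω) (V ω) 1 = F (X t ω + V ω) - F (X t ω) := by simp [DD.Q]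
        have h2 := Q_mono hF (X t ω) (V ω) (hsm m) (hs1 m)
        have h3 : X t ω + V ω = X (t+1) ω := by simp [hV]
        rw [h1, h3] at h2
        exact h2
      have hlb := le_Q hF (X t ω) (V ω) (hsm m)
      have he : X t ω - V ω = X t ω + (X t ω - X (t+1) ω) := by simp [hV]; abel
      rw [he] at hlb
      have hFy := hCF _ hy
      have hFx := hCF _ hx
      have hFc2 := hCbox _ (hcombo _ hx _ hy)
      rw [Real.norm_eq_abs, abs_le]
      rw [abs_le] at hFy hFx hFc2
      constructor <;> [linarith; linarith]
    have hqint : ∀ m, Integrable (q m) P := fun m =>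
      Integrable.mono' (integrable_const (2*C)) (hqmeas m).aestronglyMeasurable (hqbdd m)
    have hqpos : ∀ m, 0 ≤ ∫ ω, q m ω ∂P := by
      intro m
      set s : ℝ := 1/((m:ℝ)+1) with hsdef
      set Z : Ω → Fin k → ℝ := fun ω => X t ω + s • V ω with hZ
      have hZa : ∀ a, Integrable (fun ω => Z ω a) P := fun a =>
        ((hXa t a).add (((hXa (t+1) a).sub (hXa t a)).const_mul s))
      have hFZ : Integrable (fun ω => F (Z ω)) P := by
        refine Integrable.mono' (integrable_const C)
          (hFc.measurable.comp
            (((hXm t).add (((hXm (t+1)).sub (hXm t)).const_smul s)))).aestronglyMeasurable ?_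
        filter_upwards [hZS m] with ω hω
        rw [Real.norm_eq_abs]
        exact hCF _ hω
      have hJ := condexp_jensen hF (𝔉.le t) Z hZa hFZ
      have hcoord : ∀ a : Fin k, (P[fun ω' => Z ω' a|𝔉 t]) =ᵐ[P] fun ω => X t ω a := by
        intro a
        have c1 : P[(fun ω => X t ω a)|𝔉 t] = fun ω => X t ω a :=
          condExp_of_stronglyMeasurable (𝔉.le t) stronglyMeasurable_condExp integrable_condExp
        have c2 : P[(fun ω => X (t+1) ω a)|𝔉 t] =ᵐ[P] fun ω => X t ω a :=
          condExp_condExp_of_le (𝔉.mono (Nat.le_succ t)) (𝔉.le (t+1))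
        have hsplit : (fun ω' => Z ω' a)
            = (fun ω => X t ω a) + s • ((fun ω => X (t+1) ω a) - (fun ω => X t ω a)) := rfl
        rw [hsplit]
        have hdiffint : Integrable ((fun ω => X (t+1) ω a) - (fun ω => X t ω a)) P :=
          (hXa (t+1) a).sub (hXa t a)
        have hadd := condExp_add (μ := P) (m := 𝔉 t) (hXa t a) (hdiffint.smul s)
        refine hadd.trans ?_
        have hsmul := condExp_smul (μ := P) (m := 𝔉 t) s
          ((fun ω => X (t+1) ω a) - (fun ω => X t ω a))
        have hsub := condExp_sub (μ := P) (m := 𝔉 t) (hXa (t+1) a) (hXa t a)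
        filter_upwards [hsmul, hsub, c2] with ω e1 e2 e3
        have c1ω : (P[(fun ω => X t ω a)|𝔉 t]) ω = X t ω a := congrFun c1 ω
        simp only [Pi.add_apply, Pi.smul_apply, Pi.sub_apply, smul_eq_mul] at e1 e2 e3 ⊢
        rw [c1ω, e1, e2, e3, c1ω]
        ring
      have hXae : ∀ᵐ ω ∂P, (fun a => (P[fun ω' => Z ω' a|𝔉 t]) ω) = X t ω := by
        filter_upwards [ae_all_iff.2 hcoord] with ω hω
        funext a
        exact hω a
      have hstep : ∫ ω, F (X t ω) ∂P ≤ ∫ ω, F (Z ω) ∂P := by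
        have hae : ∀ᵐ ω ∂P, F (X t ω) ≤ (P[fun ω' => F (Z ω')|𝔉 t]) ω := by
          filter_upwards [hJ, hXae] with ω h1 h2
          rw [h2] at h1
          exact h1
        calc ∫ ω, F (X t ω) ∂P ≤ ∫ ω, (P[fun ω' => F (Z ω')|𝔉 t]) ω ∂P :=
          integral_mono_ae (hFXint t) integrable_condExp hae
        _ = ∫ ω, F (Z ω) ∂P := integral_condExp (𝔉.le t)
      have hqrw : ∫ ω, q m ω ∂P = (∫ ω, (F (Z ω) - F (X t ω)) ∂P) / s := by
        rw [← integral_div]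
        rfl
      rw [hqrw]
      apply div_nonneg _ (hsm m).le
      rw [integral_sub hFZ (hFXint t)]
      linarith [hstep]
    have hanti : ∀ ω, Antitone fun m => q m ω := by
      intro ω m m' hmm'
      apply Q_mono hF _ _ (hsm m')
      apply one_div_le_one_div_of_le (by positivity)
      have : (m:ℝ) ≤ (m':ℝ) := by exact_mod_cast hmm'
      linarith
    have htend : ∀ ω, Filter.Tendsto (fun m => q m ω) Filter.atTop (𝓝 (dd t ω)) := by
      intro ω
      have hrange : BddBelow (Set.range fun m : ℕ => q m ω) := by
        refine ⟨F (X t ω) - F (X t ω - V ω), ?_⟩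
        rintro b ⟨m, rfl⟩
        exact le_Q hF _ _ (hsm m)
      rw [show dd t ω = ⨅ m : ℕ, q m ω from dirDeriv_eq_iInf hF _ _]
      exact tendsto_atTop_ciInf (hanti ω) hrange
    have hlim := integral_tendsto_of_tendsto_of_antitone hqint (hddint t)
      (Filter.Eventually.of_forall hanti) (Filter.Eventually.of_forall htend)
    exact ge_of_tendsto hlim (Filter.Eventually.of_forall hqpos)
  -- telescoping bound on the total expected Bregman divergence
  have hb_le : ∀ t, ∫ ω, B t ω ∂P ≤ (∫ ω, F (X (t+1) ω) ∂P) - ∫ ω, F (X t ω) ∂P := by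
    intro t
    have hi1 : Integrable (fun ω => F (X (t+1) ω) - F (X t ω)) P :=
      (hFXint (t+1)).sub (hFXint t)
    have hsplit : ∫ ω, B t ω ∂P = ∫ ω, ((F (X (t+1) ω) - F (X t ω)) - dd t ω) ∂P := rfl
    rw [hsplit, integral_sub hi1 (hddint t), integral_sub (hFXint (t+1)) (hFXint t)]
    linarith [hdd_nonneg t]
  have htel : ∑ t ∈ Finset.range n, ∫ ω, B t ω ∂P ≤ bregDiam F S := by
    calc ∑ t ∈ Finset.range n, ∫ ω, B t ω ∂P
        ≤ ∑ t ∈ Finset.range n, ((∫ ω, F (X (t+1) ω) ∂P) - ∫ ω, F (X t ω) ∂P) :=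
          Finset.sum_le_sum fun t _ => hb_le t
      _ = (∫ ω, F (X n ω) ∂P) - ∫ ω, F (X 0 ω) ∂P :=
          Finset.sum_range_sub (fun t => ∫ ω, F (X t ω) ∂P) n
      _ ≤ bregDiam F S := by
          rw [← integral_sub (hFXint n) (hFXint 0)]
          have hconst : ∫ (_ : Ω), bregDiam F S ∂P = bregDiam F S := by
            simp [measure_univ]
          rw [← hconst]
          refine integral_mono_ae ((hFXint n).sub (hFXint 0)) (integrable_const _) ?_
          filter_upwards [hXS n, hXS 0] with ω h1 h2
          exact le_csSup hdiam ⟨X n ω, h1, X 0 ω, h2, rfl⟩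
  -- per-step bound on the expected regret
  have hstep : ∀ t, t < n → ∫ ω, Δ t ω ∂P ≤ α + Real.sqrt (β * ∫ ω, B t ω ∂P) := by
    intro t ht
    have hcond_nonneg : 0 ≤ᵐ[P] P[B t|𝔉 t] :=
      condExp_nonneg (Filter.Eventually.of_forall fun ω => hBnonneg t ω)
    have hcond_bdd : ∀ᵐ ω ∂P, (P[B t|𝔉 t]) ω ≤ 4*C := by
      have hle : B t ≤ᵐ[P] fun _ => 4*C := by
        filter_upwards [hBbdd t] with ω hω
        rw [Real.norm_eq_abs, abs_le] at hω
        exact hω.2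
      have h1 := condExp_mono (m := 𝔉 t) (hBint t) (integrable_const (4*C)) hle
      have h2 : P[(fun _ : Ω => 4*C)|𝔉 t] = fun _ => 4*C := condExp_const (𝔉.le t) _
      filter_upwards [h1] with ω hω
      rw [h2] at hω
      exact hω
    set g : Ω → ℝ := fun ω => Real.sqrt (β * (P[B t|𝔉 t]) ω) with hgdef
    have hgm : AEStronglyMeasurable g P := by
      have hm : Measurable (P[B t|𝔉 t]) := (stronglyMeasurable_condExp.mono (𝔉.le t)).measurable
      exact ((Real.continuous_sqrt.comp (continuous_const.mul continuous_id)).measurable.comp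
        hm).aestronglyMeasurable
    have hgint : Integrable g P := by
      refine Integrable.mono' (integrable_const (Real.sqrt (β * (4*C)))) hgm ?_
      filter_upwards [hcond_nonneg, hcond_bdd] with ω h0 h1
      rw [Real.norm_eq_abs, abs_of_nonneg (Real.sqrt_nonneg _)]
      exact Real.sqrt_le_sqrt (by nlinarith)
    have hmono : ∫ ω, (P[Δ t|𝔉 t]) ω ∂P ≤ ∫ ω, (α + g ω) ∂P :=
      integral_mono_ae integrable_condExp ((integrable_const α).add hgint) (hbound t ht)
    have h1 : ∫ ω, (P[Δ t|𝔉 t]) ω ∂P = ∫ ω, Δ t ω ∂P := integral_condExp (𝔉.le t)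
    have h2 : ∫ ω, (α + g ω) ∂P = α + ∫ ω, g ω ∂P := by
      rw [integral_add (integrable_const α) hgint, integral_const]
      simp [measure_univ]
    have h3 : ∫ ω, g ω ∂P ≤ Real.sqrt (∫ ω, β * (P[B t|𝔉 t]) ω ∂P) := by
      refine integral_sqrt_le' ((integrable_condExp).const_mul β) ?_ hgint
      filter_upwards [hcond_nonneg] with ω h0
      exact mul_nonneg hβ h0
    have h4 : ∫ ω, β * (P[B t|𝔉 t]) ω ∂P = β * ∫ ω, B t ω ∂P := by
      rw [MeasureTheory.integral_const_mul, integral_condExp (𝔉.le t)]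
    rw [h4] at h3
    linarith
  -- final assembly
  have hsum : ∫ ω, (∑ t ∈ Finset.range n, Δ t ω) ∂P = ∑ t ∈ Finset.range n, ∫ ω, Δ t ω ∂P :=
    integral_finset_sum _ (fun t ht => hΔ t (Finset.mem_range.mp ht))
  set b : ℕ → ℝ := fun t => ∫ ω, B t ω ∂P with hbdef
  have hbnn : ∀ t, 0 ≤ b t := fun t => integral_nonneg (hBnonneg t)
  have hCS : ∑ t ∈ Finset.range n, Real.sqrt (β * b t) ≤ Real.sqrt (n * β * bregDiam F S) := by
    have hsq : (∑ t ∈ Finset.range n, Real.sqrt (β * b t))^2 ≤ n * (β * bregDiam F S) := by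
      calc (∑ t ∈ Finset.range n, Real.sqrt (β * b t))^2
          ≤ (Finset.range n).card * ∑ t ∈ Finset.range n, (Real.sqrt (β * b t))^2 :=
            sq_sum_le_card_mul_sum_sq
        _ = n * ∑ t ∈ Finset.range n, (β * b t) := by
            rw [Finset.card_range]
            congr 1
            exact Finset.sum_congr rfl fun t _ => Real.sq_sqrt (mul_nonneg hβ (hbnn t))
        _ = n * (β * ∑ t ∈ Finset.range n, b t) := by rw [← Finset.mul_sum]
        _ ≤ n * (β * bregDiam F S) :=
            mul_le_mul_of_nonneg_left (mul_le_mul_of_nonneg_left htel hβ) (Nat.cast_nonneg n)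
    have hnn : 0 ≤ ∑ t ∈ Finset.range n, Real.sqrt (β * b t) :=
      Finset.sum_nonneg fun t _ => Real.sqrt_nonneg _
    calc ∑ t ∈ Finset.range n, Real.sqrt (β * b t)
        = Real.sqrt ((∑ t ∈ Finset.range n, Real.sqrt (β * b t))^2) := (Real.sqrt_sq hnn).symm
      _ ≤ Real.sqrt (n * β * bregDiam F S) := Real.sqrt_le_sqrt (by rw [mul_assoc]; exact hsq)
  calc ∫ ω, (∑ t ∈ Finset.range n, Δ t ω) ∂P
      = ∑ t ∈ Finset.range n, ∫ ω, Δ t ω ∂P := hsum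
    _ ≤ ∑ t ∈ Finset.range n, (α + Real.sqrt (β * b t)) :=
        Finset.sum_le_sum fun t ht => hstep t (Finset.mem_range.mp ht)
    _ = α * n + ∑ t ∈ Finset.range n, Real.sqrt (β * b t) := by
        rw [Finset.sum_add_distrib, Finset.sum_const, Finset.card_range, nsmul_eq_mul]
        ring
    _ ≤ α * n + Real.sqrt (n * β * bregDiam F S) := by linarith [hCS]


end
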